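/- Let S be a cancellative semigroup with identity. Then S admits a central series if and only if there exist a nilpotent group G with identity e, a natural number n, a finite chain {e} = G_0 ⊊ G_1 ⊊ ⋯ ⊊ G_n = G of normal subgroups of G such that for every 1 ≤ m ≤ n, every g ∈ G and every g_m ∈ G_m there exists g_{m-1} ∈ G_{m-1} with g g_m = g_{m-1} g_m g, and an injective semigroup homomorphism ι : S → G such that, identifying S with ι(S), for every 0 ≤ m ≤ n the set S_m := S ∩ G_m satisfies G_m = S_m^{-1} S_m := {a^{-1} b : a, b ∈ S_m}. -/

import Mathlib

universe u

/-- A central series for a semigroup `S` with identity: a finite chain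
`{e} = T 0 ⊊ T 1 ⊊ ⋯ ⊊ T n = S` of subsemigroups such that each `T m` is right
reversible, and for every `1 ≤ m ≤ n`, `a ∈ T m` and `s ∈ S` there are
`x, y ∈ T (m-1)` with `x * a * s = y * s * a`. -/
def IsCentralSeries {S : Type*} [Monoid S] (n : ℕ) (T : ℕ → Subsemigroup S) : Prop :=
  ((T 0 : Set S) = {1}) ∧ (T n = ⊤) ∧
  (∀ m, m < n → T m < T (m + 1)) ∧
  (∀ m, m ≤ n → ∀ x ∈ T m, ∀ y ∈ T m, ∃ a ∈ T m, ∃ b ∈ T m, a * x = b * y) ∧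
  (∀ m, 1 ≤ m → m ≤ n → ∀ a ∈ T m, ∀ s : S,
    ∃ x ∈ T (m - 1), ∃ y ∈ T (m - 1), x * a * s = y * s * a)

/-- The data of a nilpotent enveloping group for a cancellative semigroup `S` with
identity: a nilpotent group `G` with a finite chain `{e} = G 0 ⊊ G 1 ⊊ ⋯ ⊊ G n = G` of
normal subgroups such that for every `1 ≤ m ≤ n`, `g ∈ G` and `g_m ∈ G_m` there is
`g_{m-1} ∈ G_{m-1}` with `g * g_m = g_{m-1} * g_m * g`, together with an embedding
`ι : S → G` such that, identifying `S` with `ι S`, each `S_m := S ∩ G_m` satisfies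
`G_m = S_m⁻¹ * S_m`. -/
structure NilpotentEnvelope (S : Type u) [Monoid S] : Type (u + 1) where
  G : Type u
  [grp : Group G]
  nilpotent : Group.IsNilpotent G
  n : ℕ
  H : ℕ → Subgroup G
  bot : H 0 = ⊥
  top : H n = ⊤
  strict : ∀ m, m < n → H m < H (m + 1)
  normal : ∀ m, m ≤ n → (H m).Normal
  central : ∀ m, 1 ≤ m → m ≤ n → ∀ g : G, ∀ gm ∈ H m,
    ∃ h ∈ H (m - 1), g * gm = h * gm * g
  ι : S →ₙ* G
  inj : Function.Injective ι
  quot : ∀ m, m ≤ n →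
    (H m : Set G) = {g : G | ∃ a b : S, ι a ∈ H m ∧ ι b ∈ H m ∧ g = (ι a)⁻¹ * ι b}

open OreLocalization in
lemma exists_fraction_group {S : Type u} [CancelMonoid S]
    (hrev : ∀ x y : S, ∃ a b : S, a * x = b * y) :
    ∃ (G : Type u) (_ : Group G) (ι : S →ₙ* G), Function.Injective ι ∧
      ∀ g : G, ∃ a b : S, ι a * g = ι b := by
  classical
  haveI : OreSet (⊤ : Submonoid S) :=
    { ore_right_cancel := fun r₁ r₂ s h => ⟨1, by
        simpa using mul_right_cancel h⟩
      oreNum := fun r s => (hrev r s).choose_spec.choose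
      oreDenom := fun r s => ⟨(hrev r s).choose, trivial⟩
      ore_eq := fun r s => ((hrev r s).choose_spec.choose_spec) }
  set M := OreLocalization (⊤ : Submonoid S) S with hM
  have hu : ∀ g : M, IsUnit g := by
    intro g
    induction g using OreLocalization.ind with
    | c r s =>
      refine ⟨⟨r /ₒ s, (s : S) /ₒ ⟨r, Submonoid.mem_top r⟩, ?_, ?_⟩, rfl⟩
      · exact OreLocalization.mul_inv ⟨r, Submonoid.mem_top r⟩ s
      · exact OreLocalization.mul_inv s ⟨r, Submonoid.mem_top r⟩
  letI : Group M :=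
    { (inferInstance : Monoid M) with
      inv := fun g => (((hu g).unit⁻¹ : Mˣ) : M)
      inv_mul_cancel := fun g => by
        show (((hu g).unit⁻¹ : Mˣ) : M) * g = 1
        conv_lhs => rw [← (hu g).unit_spec]
        exact Units.inv_mul _ }
  refine ⟨M, inferInstance, (numeratorHom : S →* M).toMulHom, ?_, ?_⟩
  · intro a b h
    have h' : OreLocalization.numeratorHom a = OreLocalization.numeratorHom b := h
    rw [OreLocalization.numeratorHom_apply, OreLocalization.numeratorHom_apply,
      OreLocalization.oreDiv_eq_iff] at h'
    obtain ⟨u, v, h1, h2⟩ := h'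
    simp only [Submonoid.smul_def, smul_eq_mul] at h1
    have h3 : (u : S) = v := by simpa using h2
    rw [← h3] at h1
    exact (mul_left_cancel h1).symm
  · intro g
    induction g using OreLocalization.ind with
    | c r s =>
      refine ⟨(s : S), r, ?_⟩
      show OreLocalization.numeratorHom (s : S) * (r /ₒ s) = OreLocalization.numeratorHom r
      rw [OreLocalization.numeratorHom_apply, OreLocalization.numeratorHom_apply,
        oreDiv_mul_char (s : S) r 1 s 1 1 (by simp)]
      simp

lemma compress_chain {G : Type u} [Group G] :
    ∀ (n : ℕ) (H : ℕ → Subgroup G), H 0 = ⊥ → H n = ⊤ →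
    (∀ m, m < n → H m ≤ H (m + 1)) →
    (∀ m, 1 ≤ m → m ≤ n → ∀ g x : G, x ∈ H m → ∃ h ∈ H (m - 1), g * x = h * x * g) →
    ∃ (n' : ℕ) (H' : ℕ → Subgroup G), H' 0 = ⊥ ∧ H' n' = ⊤ ∧
      (∀ m, m < n' → H' m < H' (m + 1)) ∧
      (∀ m, 1 ≤ m → m ≤ n' → ∀ g x : G, x ∈ H' m → ∃ h ∈ H' (m - 1), g * x = h * x * g) ∧
      (∀ m, m ≤ n' → ∃ j, j ≤ n ∧ H' m = H j) := by
  intro n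
  induction n using Nat.strong_induction_on with
  | _ n IH =>
    intro H hbot htop hmono hcen
    by_cases hdup : ∃ m, m < n ∧ H m = H (m + 1)
    · obtain ⟨m₀, hm₀n, hm₀⟩ := hdup
      have hn1 : 1 ≤ n := Nat.one_le_iff_ne_zero.mpr (by omega)
      set H' : ℕ → Subgroup G := fun k => if k ≤ m₀ then H k else H (k + 1) with hH'
      have hH'eq : ∀ k, H' k = if k ≤ m₀ then H k else H (k + 1) := fun k => rfl
      have h'bot : H' 0 = ⊥ := by rw [hH'eq]; simp [hbot]
      have h'top : H' (n - 1) = ⊤ := by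
        rw [hH'eq]
        by_cases h : n - 1 ≤ m₀
        · have : m₀ = n - 1 := by omega
          simp only [if_pos h]
          rw [← htop, ← this, hm₀]
          congr 1
          omega
        · simp only [if_neg h]
          rw [← htop]
          congr 1
          omega
      have h'mono : ∀ m, m < n - 1 → H' m ≤ H' (m + 1) := by
        intro k hk
        rw [hH'eq, hH'eq]
        rcases lt_trichotomy k m₀ with h | h | h
        · rw [if_pos (by omega), if_pos (by omega)]
          exact hmono k (by omega)
        · subst h
          rw [if_pos (by omega), if_neg (by omega), hm₀]
          exact hmono (k + 1) (by omega)
        · rw [if_neg (by omega), if_neg (by omega)]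
          exact hmono (k + 1) (by omega)
      have h'cen : ∀ m, 1 ≤ m → m ≤ n - 1 → ∀ g x : G, x ∈ H' m →
          ∃ h ∈ H' (m - 1), g * x = h * x * g := by
        intro m h1 h2 g x hx
        rw [hH'eq] at hx
        rw [hH'eq]
        rcases lt_trichotomy m m₀ with h | h | h
        · rw [if_pos (by omega)] at hx
          rw [if_pos (by omega)]
          exact hcen m h1 (by omega) g x hx
        · subst h
          rw [if_pos (by omega)] at hx
          rw [if_pos (by omega)]
          exact hcen m h1 (by omega) g x hx
        · rw [if_neg (by omega)] at hx
          by_cases h' : m = m₀ + 1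
          · rw [if_pos (by omega)]
            obtain ⟨h'', hh, heq⟩ := hcen (m + 1) (by omega) (by omega) g x hx
            refine ⟨h'', ?_, heq⟩
            rw [show m + 1 - 1 = m by omega] at hh
            rw [show m - 1 = m₀ by omega, hm₀, show m₀ + 1 = m by omega]
            exact hh
          · rw [if_neg (by omega)]
            obtain ⟨h'', hh, heq⟩ := hcen (m + 1) (by omega) (by omega) g x hx
            refine ⟨h'', ?_, heq⟩
            rw [show m + 1 - 1 = m by omega] at hh
            rw [show m - 1 + 1 = m by omega]
            exact hh
      obtain ⟨n', H'', c1, c2, c3, c4, c5⟩ :=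
        IH (n - 1) (by omega) H' h'bot h'top h'mono h'cen
      refine ⟨n', H'', c1, c2, c3, c4, ?_⟩
      intro m hm
      obtain ⟨j, hj, hjeq⟩ := c5 m hm
      rw [hH'eq] at hjeq
      by_cases h : j ≤ m₀
      · exact ⟨j, by omega, by rwa [if_pos h] at hjeq⟩
      · exact ⟨j + 1, by omega, by rwa [if_neg h] at hjeq⟩
    · push_neg at hdup
      refine ⟨n, H, hbot, htop, ?_, hcen, fun m hm => ⟨m, hm, rfl⟩⟩
      intro m hm
      exact lt_of_le_of_ne (hmono m hm) (hdup m hm)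

lemma series_to_envelope {S : Type u} [CancelMonoid S] (n : ℕ) (T : ℕ → Subsemigroup S)
    (hT : IsCentralSeries n T) : Nonempty (NilpotentEnvelope S) := by
  obtain ⟨h0, htop, hstrict, hrev, hcen⟩ := hT
  have hmono : ∀ b, b ≤ n → ∀ a, a ≤ b → T a ≤ T b := by
    intro b
    induction b with
    | zero => intro _ a ha; rw [Nat.le_zero] at ha; subst ha; exact le_rfl
    | succ k ih =>
      intro hk a ha
      by_cases h : a = k + 1
      · subst h; exact le_rfl
      · exact le_trans (ih (by omega) a (by omega)) (hstrict k (by omega)).le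
  have hone : ∀ m, m ≤ n → (1 : S) ∈ T m := by
    intro m hm
    refine hmono m hm 0 (Nat.zero_le m) ?_
    show (1 : S) ∈ (T 0 : Set S)
    rw [h0]
    rfl
  have hrevtop : ∀ x y : S, ∃ a b : S, a * x = b * y := by
    intro x y
    obtain ⟨a, _, b, _, h⟩ := hrev n le_rfl x (by rw [htop]; trivial) y (by rw [htop]; trivial)
    exact ⟨a, b, h⟩
  obtain ⟨G, _G, ι, hinj, hfrac⟩ := exists_fraction_group hrevtop
  have hι1 : ι 1 = 1 := by
    have : ι 1 * ι 1 = ι 1 * 1 := by rw [← map_mul, mul_one, mul_one]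
    exact mul_left_cancel this
  set Hm : ℕ → Subgroup G := fun m =>
    { carrier := {g : G | ∃ a ∈ T (min m n), ∃ b ∈ T (min m n), ι a * g = ι b}
      one_mem' := ⟨1, hone _ (min_le_right m n), 1, hone _ (min_le_right m n), by rw [mul_one]⟩
      mul_mem' := by
        rintro g g' ⟨a, ha, b, hb, hab⟩ ⟨c, hc, d, hd, hcd⟩
        obtain ⟨u, hu, v, hv, huv⟩ := hrev (min m n) (min_le_right m n) b hb c hc
        refine ⟨u * a, mul_mem hu ha, v * d, mul_mem hv hd, ?_⟩
        calc ι (u * a) * (g * g')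
            = ι u * (ι a * g * g') := by rw [map_mul]; group
          _ = ι u * (ι b * g') := by rw [hab]
          _ = ι (u * b) * g' := by rw [map_mul]; group
          _ = ι (v * c) * g' := by rw [huv]
          _ = ι v * (ι c * g') := by rw [map_mul]; group
          _ = ι v * ι d := by rw [hcd]
          _ = ι (v * d) := by rw [map_mul]
      inv_mem' := by
        rintro g ⟨a, ha, b, hb, hab⟩
        exact ⟨b, hb, a, ha, by rw [← hab]; group⟩ } with hHm
  have hmemH : ∀ m (g : G), g ∈ Hm m ↔
      ∃ a ∈ T (min m n), ∃ b ∈ T (min m n), ι a * g = ι b := fun _ _ => Iff.rfl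
  have hHbot : Hm 0 = ⊥ := by
    ext g
    rw [hmemH, Subgroup.mem_bot]
    constructor
    · rintro ⟨a, ha, b, hb, hab⟩
      rw [Nat.zero_min] at ha hb
      have ha' : a ∈ (T 0 : Set S) := ha
      have hb' : b ∈ (T 0 : Set S) := hb
      rw [h0] at ha' hb'
      rw [Set.mem_singleton_iff] at ha' hb'
      subst ha'; subst hb'
      exact mul_left_cancel (by rw [hab, mul_one])
    · rintro rfl
      exact ⟨1, by rw [Nat.zero_min]; exact hone 0 (Nat.zero_le n), 1,
        by rw [Nat.zero_min]; exact hone 0 (Nat.zero_le n), by rw [mul_one]⟩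
  have hHtop : Hm n = ⊤ := by
    rw [eq_top_iff]
    intro g _
    obtain ⟨a, b, hab⟩ := hfrac g
    exact ⟨a, by rw [Nat.min_self, htop]; trivial, b, by rw [Nat.min_self, htop]; trivial, hab⟩
  have hHstep : ∀ m, m < n → Hm m ≤ Hm (m + 1) := by
    intro m hm g hg
    rw [hmemH] at hg ⊢
    obtain ⟨a, ha, b, hb, hab⟩ := hg
    rw [Nat.min_eq_left (Nat.le_of_lt hm)] at ha hb
    rw [Nat.min_eq_left hm]
    exact ⟨a, hmono (m+1) hm m (by omega) ha, b, hmono (m+1) hm m (by omega) hb, hab⟩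
  have hιmem : ∀ m, m ≤ n → ∀ a, a ∈ T m → ι a ∈ Hm m := by
    intro m hm a ha
    rw [hmemH, Nat.min_eq_left hm]
    exact ⟨1, hone m hm, a, ha, by rw [hι1, one_mul]⟩
  -- key induction: central property and normality
  have hkey : ∀ m, m ≤ n → (Hm m).Normal ∧
      (1 ≤ m → ∀ g x : G, x ∈ Hm m → ∃ h ∈ Hm (m - 1), g * x = h * x * g) := by
    intro m
    induction m with
    | zero =>
      intro _
      refine ⟨?_, by omega⟩
      rw [hHbot]
      infer_instance
    | succ k ih =>
      intro hk1
      have hkn : k ≤ n := by omega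
      obtain ⟨hNnormal, -⟩ := ih hkn
      haveI : (Hm k).Normal := hNnormal
      -- step 1 : commutators of generators
      have step1 : ∀ a, a ∈ T (k + 1) → ∀ s : S,
          (ι a * ι s) * (ι s * ι a)⁻¹ ∈ Hm k := by
        intro a ha s
        obtain ⟨x, hx, y, hy, hxy⟩ := hcen (k + 1) (by omega) hk1 a ha s
        rw [show k + 1 - 1 = k from rfl] at hx hy
        rw [hmemH, Nat.min_eq_left hkn]
        refine ⟨x, hx, y, hy, ?_⟩
        have h1 : ι x * (ι a * ι s) = ι y * (ι s * ι a) := by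
          have := congrArg ι hxy
          simpa only [map_mul, mul_assoc] using this
        calc ι x * ((ι a * ι s) * (ι s * ι a)⁻¹)
            = ι x * (ι a * ι s) * (ι s * ι a)⁻¹ := by group
          _ = ι y * (ι s * ι a) * (ι s * ι a)⁻¹ := by rw [h1]
          _ = ι y := by group
      have comm1 : ∀ a, a ∈ T (k + 1) → ∀ s : S,
          Commute (QuotientGroup.mk (ι s) : G ⧸ Hm k) (QuotientGroup.mk (ι a)) := by
        intro a ha s
        show QuotientGroup.mk (ι s) * QuotientGroup.mk (ι a)
            = QuotientGroup.mk (ι a) * QuotientGroup.mk (ι s)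
        rw [← QuotientGroup.mk_mul, ← QuotientGroup.mk_mul]
        rw [QuotientGroup.eq]
        have h2 := hNnormal.conj_mem _ (step1 a ha s) (ι s * ι a)⁻¹
        have h3 : (ι s * ι a)⁻¹ * ((ι a * ι s) * (ι s * ι a)⁻¹) * ((ι s * ι a)⁻¹)⁻¹
            = (ι s * ι a)⁻¹ * (ι a * ι s) := by group
        rwa [h3] at h2
      have comm2 : ∀ a, a ∈ T (k + 1) →
          (QuotientGroup.mk (ι a) : G ⧸ Hm k) ∈ Subgroup.center (G ⧸ Hm k) := by
        intro a ha
        rw [Subgroup.mem_center_iff]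
        intro q
        obtain ⟨g, rfl⟩ := QuotientGroup.mk_surjective q
        obtain ⟨x, y, hxy⟩ := hfrac g
        have hg : (QuotientGroup.mk g : G ⧸ Hm k)
            = (QuotientGroup.mk (ι x))⁻¹ * QuotientGroup.mk (ι y) := by
          have : g = (ι x)⁻¹ * ι y := by rw [← hxy]; group
          rw [this, QuotientGroup.mk_mul, QuotientGroup.mk_inv]
        rw [hg]
        exact (((comm1 a ha x).inv_left).mul_left (comm1 a ha y)).eq
      have hcent_succ : ∀ g x : G, x ∈ Hm (k + 1) → ∃ h ∈ Hm k, g * x = h * x * g := by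
        intro g x hx
        rw [hmemH, Nat.min_eq_left hk1] at hx
        obtain ⟨a, ha, b, hb, hab⟩ := hx
        have hxc : (QuotientGroup.mk x : G ⧸ Hm k) ∈ Subgroup.center (G ⧸ Hm k) := by
          have hx' : x = (ι a)⁻¹ * ι b := by rw [← hab]; group
          rw [hx', QuotientGroup.mk_mul, QuotientGroup.mk_inv]
          exact mul_mem (inv_mem (comm2 a ha)) (comm2 b hb)
        have hmem : g * x * g⁻¹ * x⁻¹ ∈ Hm k := by
          rw [← QuotientGroup.eq_one_iff]
          have hc := Subgroup.mem_center_iff.mp hxc (QuotientGroup.mk g)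
          simp only [QuotientGroup.mk_mul, QuotientGroup.mk_inv]
          rw [show (QuotientGroup.mk g : G ⧸ Hm k) * QuotientGroup.mk x
            = QuotientGroup.mk x * QuotientGroup.mk g from hc]
          group
        exact ⟨g * x * g⁻¹ * x⁻¹, hmem, by group⟩
      refine ⟨?_, fun _ => by simpa using hcent_succ⟩
      constructor
      intro x hx g
      obtain ⟨h, hh, heq⟩ := hcent_succ g x hx
      have : g * x * g⁻¹ = h * x := by rw [heq]; group
      rw [this]
      exact mul_mem (hHstep k (by omega) hh) hx
  -- nilpotency
  have hnil : Group.IsNilpotent G := by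
    rw [nilpotent_iff_finite_ascending_central_series]
    refine ⟨n, fun k => Hm (min k n), ⟨by show Hm (min 0 n) = ⊥; rw [Nat.zero_min]; exact hHbot, ?_⟩,
      by show Hm (min n n) = ⊤; rw [Nat.min_self]; exact hHtop⟩
    intro x k hx g
    show x * g * x⁻¹ * g⁻¹ ∈ Hm (min k n)
    have hx' : x ∈ Hm (min (k + 1) n) := hx
    by_cases hk : k + 1 ≤ n
    · rw [Nat.min_eq_left hk] at hx'
      obtain ⟨h, hh, heq⟩ := (hkey (k + 1) hk).2 (by omega) g x hx'
      rw [show k + 1 - 1 = k from rfl] at hh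
      rw [Nat.min_eq_left (by omega : k ≤ n)]
      have h2 : g * x * g⁻¹ * x⁻¹ = h := by rw [heq]; group
      have h3 : x * g * x⁻¹ * g⁻¹ = (g * x * g⁻¹ * x⁻¹)⁻¹ := by group
      rw [h3, h2]
      exact inv_mem hh
    · rw [Nat.min_eq_right (by omega : n ≤ k), hHtop]
      trivial
  -- compress
  obtain ⟨n', H', c1, c2, c3, c4, c5⟩ := compress_chain n Hm hHbot hHtop hHstep
    (fun m h1 h2 => (hkey m h2).2 h1)
  have hnormal : ∀ m, m ≤ n' → (H' m).Normal := by
    intro m hm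
    by_cases h1 : 1 ≤ m
    · constructor
      intro x hx g
      obtain ⟨h, hh, heq⟩ := c4 m h1 hm g x hx
      have h2 : g * x * g⁻¹ = h * x := by rw [heq]; group
      rw [h2]
      have hle : H' (m - 1) ≤ H' m := by
        have := (c3 (m - 1) (by omega)).le
        rwa [show m - 1 + 1 = m by omega] at this
      exact mul_mem (hle hh) hx
    · have : m = 0 := by omega
      subst this
      rw [c1]
      infer_instance
  have hquot : ∀ m, m ≤ n' → (H' m : Set G)
      = {g : G | ∃ a b : S, ι a ∈ H' m ∧ ι b ∈ H' m ∧ g = (ι a)⁻¹ * ι b} := by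
    intro m hm
    obtain ⟨j, hj, hjeq⟩ := c5 m hm
    rw [hjeq]
    ext g
    simp only [SetLike.mem_coe, Set.mem_setOf_eq]
    constructor
    · intro hg
      obtain ⟨a, ha, b, hb, hab⟩ := (hmemH j g).mp hg
      rw [Nat.min_eq_left hj] at ha hb
      exact ⟨a, b, hιmem j hj a ha, hιmem j hj b hb, by rw [← hab]; group⟩
    · rintro ⟨a, b, ha, hb, rfl⟩
      exact mul_mem (inv_mem ha) hb
  exact ⟨{ G := G, grp := _G, nilpotent := hnil, n := n', H := H', bot := c1, top := c2,
           strict := c3, normal := hnormal, central := c4, ι := ι, inj := hinj,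
           quot := hquot }⟩

lemma envelope_to_series {S : Type u} [CancelMonoid S] (E : NilpotentEnvelope S) :
    ∃ (n : ℕ) (T : ℕ → Subsemigroup S), IsCentralSeries n T := by
  letI : Group E.G := E.grp
  set ι := E.ι with hι
  have hι1 : ι 1 = 1 := by
    have : ι 1 * ι 1 = ι 1 * 1 := by rw [← map_mul, mul_one, mul_one]
    exact mul_left_cancel this
  set T : ℕ → Subsemigroup S := fun m =>
    { carrier := {s : S | ι s ∈ E.H (min m E.n)}
      mul_mem' := fun {a b} ha hb => by
        simp only [Set.mem_setOf_eq, map_mul] at *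
        exact mul_mem ha hb } with hT
  have hmemT : ∀ m (s : S), s ∈ T m ↔ ι s ∈ E.H (min m E.n) := fun m s => Iff.rfl
  refine ⟨E.n, T, ?_, ?_, ?_, ?_, ?_⟩
  · -- T 0 = {1}
    ext s
    simp only [SetLike.mem_coe, hmemT, Nat.zero_min, E.bot, Subgroup.mem_bot,
      Set.mem_singleton_iff]
    constructor
    · intro h; exact E.inj (by rw [hι1]; exact h)
    · rintro rfl; exact hι1
  · -- T n = ⊤
    ext s
    simp [hmemT, Nat.min_self, E.top]
  · -- strict
    intro m hm
    have hmin1 : min (m + 1) E.n = m + 1 := Nat.min_eq_left hm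
    have hmin0 : min m E.n = m := Nat.min_eq_left (Nat.le_of_lt hm)
    have hle : T m ≤ T (m + 1) := by
      intro s hs
      rw [hmemT] at *
      rw [hmin1]; rw [hmin0] at hs
      exact (E.strict m hm).le hs
    refine lt_of_le_of_ne hle ?_
    intro heq
    obtain ⟨g, hg1, hg0⟩ := SetLike.exists_of_lt (E.strict m hm)
    have hq := E.quot (m + 1) hm
    have : g ∈ {g : E.G | ∃ a b : S, ι a ∈ E.H (m+1) ∧ ι b ∈ E.H (m+1) ∧ g = (ι a)⁻¹ * ι b} := by
      rw [← hq]; exact hg1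
    obtain ⟨a, b, ha, hb, rfl⟩ := this
    have ha' : a ∈ T (m + 1) := by rw [hmemT, hmin1]; exact ha
    have hb' : b ∈ T (m + 1) := by rw [hmemT, hmin1]; exact hb
    rw [← heq] at ha' hb'
    rw [hmemT, hmin0] at ha' hb'
    exact hg0 (mul_mem (inv_mem ha') hb')
  · -- right reversible
    intro m hm x hx y hy
    rw [hmemT, Nat.min_eq_left hm] at hx hy
    have hg : ι x * (ι y)⁻¹ ∈ E.H m := mul_mem hx (inv_mem hy)
    have hq := E.quot m hm
    have : ι x * (ι y)⁻¹ ∈ {g : E.G | ∃ a b : S, ι a ∈ E.H m ∧ ι b ∈ E.H m ∧ g = (ι a)⁻¹ * ι b} := by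
      rw [← hq]; exact hg
    obtain ⟨a, b, ha, hb, heq⟩ := this
    refine ⟨a, by rw [hmemT, Nat.min_eq_left hm]; exact ha,
            b, by rw [hmemT, Nat.min_eq_left hm]; exact hb, ?_⟩
    apply E.inj
    rw [map_mul, map_mul]
    have : ι a * (ι x * (ι y)⁻¹) = ι b := by rw [heq]; group
    calc ι a * ι x = ι a * (ι x * (ι y)⁻¹) * ι y := by group
    _ = ι b * ι y := by rw [this]
  · -- central
    intro m hm1 hmn a ha s
    rw [hmemT, Nat.min_eq_left hmn] at ha
    obtain ⟨h, hh, heq⟩ := E.central m hm1 hmn (ι s) (ι a) ha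
    have hq := E.quot (m - 1) (le_trans (Nat.sub_le m 1) hmn)
    have : h ∈ {g : E.G | ∃ a b : S, ι a ∈ E.H (m-1) ∧ ι b ∈ E.H (m-1) ∧ g = (ι a)⁻¹ * ι b} := by
      rw [← hq]; exact hh
    obtain ⟨x, y, hx, hy, rfl⟩ := this
    have hm1n : min (m - 1) E.n = m - 1 := Nat.min_eq_left (le_trans (Nat.sub_le m 1) hmn)
    refine ⟨y, by rw [hmemT, hm1n]; exact hy, x, by rw [hmemT, hm1n]; exact hx, ?_⟩
    apply E.inj
    simp only [map_mul]
    -- heq : ι s * ι a = (ι x)⁻¹ * ι y * ι a * ι s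
    -- goal : ι y * ι a * ι s = ι x * ι s * ι a
    have : ι x * (ι s * ι a) = ι x * ((ι x)⁻¹ * ι y * ι a * ι s) := by rw [heq]
    rw [show ι x * ((ι x)⁻¹ * ι y * ι a * ι s) = ι y * ι a * ι s by group] at this
    rw [← this]
    group
    rfl

/-- **Characterisation of cancellative semigroups with identity admitting a central
series**: `S` admits a central series if and only if `S` embeds into a nilpotent group
`G` with a chain of normal subgroups as in `NilpotentEnvelope`. -/
theorem central_series_iff_nilpotent_envelope
    {S : Type u} [CancelMonoid S] :
    (∃ (n : ℕ) (T : ℕ → Subsemigroup S), IsCentralSeries n T) ↔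
      Nonempty (NilpotentEnvelope S) := by
  constructor
  · rintro ⟨n, T, hT⟩
    exact series_to_envelope n T hT
  · rintro ⟨E⟩
    exact envelope_to_series E
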